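/- In ℂ² let φ = (1,0) and, for 0 ≤ a ≤ 1, let γ be the rank-one projection with matrix [[1−a, √(a−a²)],[√(a−a²), a]]. Then E := 1 − ⟨φ, γφ⟩ = a, tr|γ(1 − p)| = √a where p = |φ⟩⟨φ|, and R := tr|γ − p| ≥ √E / 2. -/

import Mathlib

open ComplexOrder Matrix

lemma trace_eq_sum_eigs {n : Type*} [Fintype n] [DecidableEq n]
    {A : Matrix n n ℂ} (hA : A.IsHermitian) :
    A.trace = ∑ i, (hA.eigenvalues i : ℂ) := by
  conv_lhs => rw [hA.spectral_theorem]
  rw [Unitary.conjStarAlgAut_apply]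
  rw [Matrix.trace_mul_cycle,
    (Matrix.mem_unitaryGroup_iff').mp (hA.eigenvectorUnitary).2, one_mul,
    Matrix.trace_diagonal]
  rfl

/-- Sharpness of `R ≤ √(8E)`: in `ℂ²` with `φ = (1,0)` and the rank-one projection
`γ = [[1−a, √(a−a²)],[√(a−a²), a]]` for `0 ≤ a ≤ 1`, one has `E = a`,
`tr|γ(1−p)| = √a` (the trace norm being the sum of the singular values,
i.e. the square roots of the eigenvalues of `Bᴴ B`), and `R = tr|γ − p| ≥ √E / 2`. -/
theorem stmt_6 (a : ℝ) (ha : 0 ≤ a) (ha1 : a ≤ 1) :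
    let φ : Fin 2 → ℂ := ![1, 0]
    let γ : Matrix (Fin 2) (Fin 2) ℂ :=
      !![((1 - a : ℝ) : ℂ), ((Real.sqrt (a - a ^ 2) : ℝ) : ℂ);
         ((Real.sqrt (a - a ^ 2) : ℝ) : ℂ), ((a : ℝ) : ℂ)]
    let p : Matrix (Fin 2) (Fin 2) ℂ := Matrix.of fun i j => φ i * (starRingEnd ℂ) (φ j)
    let B : Matrix (Fin 2) (Fin 2) ℂ := γ * (1 - p)
    ∀ (hA : (γ - p).IsHermitian) (hB : (Bᴴ * B).IsHermitian),
      (1 - (dotProduct (star φ) (γ *ᵥ φ)).re = a)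
      ∧ (∑ i, Real.sqrt (hB.eigenvalues i) = Real.sqrt a)
      ∧ (∑ i, |hA.eigenvalues i|
          ≥ Real.sqrt (1 - (dotProduct (star φ) (γ *ᵥ φ)).re) / 2) := by
  intro φ γ p B hA hB
  have hanneg : (0:ℝ) ≤ a - a ^ 2 := by nlinarith
  have hs : (Real.sqrt (a - a ^ 2)) ^ 2 = a - a ^ 2 := Real.sq_sqrt hanneg
  set s : ℝ := Real.sqrt (a - a ^ 2) with hsdef
  have hsc : (s : ℂ) * s = (a : ℂ) - a * a := by
    have h : s * s = a - a * a := by nlinarith [hs]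
    exact_mod_cast h
  have h1 : 1 - (dotProduct (star φ) (γ *ᵥ φ)).re = a := by
    simp [φ, γ, dotProduct, Matrix.mulVec, Fin.sum_univ_two]
  -- explicit form of 1 - p
  have hp : (1 - p) = !![(0:ℂ), 0; 0, 1] := by
    ext i j
    fin_cases i <;> fin_cases j <;>
      simp [p, φ, Matrix.one_apply, Matrix.sub_apply]
  -- explicit form of B
  have hBe : B = !![(0:ℂ), (s:ℂ); 0, (a:ℂ)] := by
    show γ * (1 - p) = _
    rw [hp]
    show (!![((1 - a : ℝ) : ℂ), (s:ℂ); (s:ℂ), ((a:ℝ):ℂ)]) * _ = _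
    rw [Matrix.mul_fin_two]
    congr 1 <;> push_cast <;> ring
  have hBH : Bᴴ = !![(0:ℂ), 0; (s:ℂ), (a:ℂ)] := by
    rw [hBe]
    ext i j
    fin_cases i <;> fin_cases j <;>
      simp [Matrix.conjTranspose_apply, Complex.conj_ofReal]
  have hBB : Bᴴ * B = !![(0:ℂ), 0; 0, (a:ℂ)] := by
    rw [hBH, hBe, Matrix.mul_fin_two]
    ext i j
    fin_cases i <;> fin_cases j <;> simp <;> linear_combination hsc
  have hAe : γ - p = !![(-a : ℂ), (s:ℂ); (s:ℂ), (a:ℂ)] := by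
    ext i j
    fin_cases i <;> fin_cases j <;>
      simp [γ, p, φ, Matrix.sub_apply] <;> push_cast <;> ring
  -- eigenvalue data for BᴴB
  have htrB : (hB.eigenvalues 0 : ℂ) + (hB.eigenvalues 1 : ℂ) = (a : ℂ) := by
    have h := (trace_eq_sum_eigs hB).symm
    rw [Fin.sum_univ_two] at h
    rw [h, hBB, Matrix.trace_fin_two_of, zero_add]
  have htrB' : hB.eigenvalues 0 + hB.eigenvalues 1 = a := by exact_mod_cast htrB
  have hdetB' : hB.eigenvalues 0 * hB.eigenvalues 1 = 0 := by
    have hd : (Bᴴ * B).det = 0 := by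
      rw [hBB, Matrix.det_fin_two_of]; ring
    have h := hB.det_eq_prod_eigenvalues
    rw [Fin.prod_univ_two] at h
    have hc := h.symm.trans hd
    rw [← RCLike.ofReal_mul] at hc
    exact RCLike.ofReal_eq_zero.mp hc
  have hpsd : (Bᴴ * B).PosSemidef := Matrix.posSemidef_conjTranspose_mul_self B
  have hμ0 : 0 ≤ hB.eigenvalues 0 := hpsd.eigenvalues_nonneg 0
  have hμ1 : 0 ≤ hB.eigenvalues 1 := hpsd.eigenvalues_nonneg 1
  have part2 : ∑ i, Real.sqrt (hB.eigenvalues i) = Real.sqrt a := by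
    rw [Fin.sum_univ_two]
    rcases mul_eq_zero.mp hdetB' with h0 | h0
    · have h : hB.eigenvalues 1 = a := by linarith
      rw [h0, h, Real.sqrt_zero, zero_add]
    · have h : hB.eigenvalues 0 = a := by linarith
      rw [h0, h, Real.sqrt_zero, add_zero]
  -- eigenvalue data for γ - p
  have htrA : (hA.eigenvalues 0 : ℂ) + (hA.eigenvalues 1 : ℂ) = 0 := by
    have h := (trace_eq_sum_eigs hA).symm
    rw [Fin.sum_univ_two] at h
    rw [h, hAe, Matrix.trace_fin_two_of]
    ring
  have htrA' : hA.eigenvalues 0 + hA.eigenvalues 1 = 0 := by exact_mod_cast htrA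
  have hdetA' : hA.eigenvalues 0 * hA.eigenvalues 1 = -a := by
    have hd : (γ - p).det = ((-a : ℝ) : ℂ) := by
      rw [hAe, Matrix.det_fin_two_of]
      push_cast
      linear_combination -hsc
    have h := hA.det_eq_prod_eigenvalues
    rw [Fin.prod_univ_two] at h
    have hc := h.symm.trans hd
    rw [← RCLike.ofReal_mul] at hc
    exact RCLike.ofReal_inj.mp hc
  have hν1 : hA.eigenvalues 1 = -hA.eigenvalues 0 := by linarith
  have hν0sq : hA.eigenvalues 0 ^ 2 = a := by
    rw [hν1] at hdetA'; nlinarith [hdetA']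
  have habs : |hA.eigenvalues 0| = Real.sqrt a := by
    rw [← hν0sq, Real.sqrt_sq_eq_abs]
  refine ⟨h1, part2, ?_⟩
  rw [h1, Fin.sum_univ_two, hν1, abs_neg, habs]
  have := Real.sqrt_nonneg a
  linarith
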